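/- arXiv:1903.10992 — 3 statements merged into one kernel-verified Lean document; each statement's English description precedes it below -/
import Mathlib

section
/- The Shapley value satisfies efficiency (completeness): for any cooperative game on a finite set P of players with characteristic function v (with v(∅)=0), the sum over all players i of their Shapley value equals v(P). -/
open Finset

/-- The Shapley value of player `i` in the cooperative game with player set `P`
and characteristic function `v`. -/
noncomputable def shapley {ι : Type*} [DecidableEq ι] (P : Finset ι)
    (v : Finset ι → ℝ) (i : ι) : ℝ :=
  ∑ S ∈ (P.erase i).powerset,
    ((Nat.factorial S.card * Nat.factorial (P.card - S.card - 1) : ℝ) /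
        (Nat.factorial P.card : ℝ)) * (v (insert i S) - v S)

/-- Efficiency (completeness) of the Shapley value. -/
theorem shapley_efficiency {ι : Type*} [DecidableEq ι] (P : Finset ι)
    (v : Finset ι → ℝ) (h0 : v ∅ = 0) :
    ∑ i ∈ P, shapley P v i = v P := by
  classical
  rcases P.eq_empty_or_nonempty with rfl | hPne
  · simpa using h0.symm
  set N := P.card with hN
  have hNpos : 0 < N := Finset.card_pos.mpr hPne
  set w : ℕ → ℝ := fun k =>
    (Nat.factorial k * Nat.factorial (N - k - 1) : ℝ) / (Nat.factorial N : ℝ) with hw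
  -- Step 1: rewrite each Shapley value as a difference of two filtered sums
  have step1 : ∀ i ∈ P, shapley P v i
      = (∑ T ∈ P.powerset.filter (fun T => i ∈ T), w (T.card - 1) * v T)
        - ∑ S ∈ P.powerset.filter (fun S => i ∉ S), w S.card * v S := by
    intro i hi
    have hpow : (P.erase i).powerset = P.powerset.filter (fun S => i ∉ S) := by
      ext S
      simp [Finset.subset_erase, and_comm]
    have hA : ∑ S ∈ (P.erase i).powerset, w S.card * v (insert i S)
        = ∑ T ∈ P.powerset.filter (fun T => i ∈ T), w (T.card - 1) * v T := by
      refine Finset.sum_nbij' (fun S => insert i S) (fun T => T.erase i)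
        ?_ ?_ ?_ ?_ ?_
      · intro S hS
        rw [Finset.mem_powerset] at hS
        rw [Finset.mem_filter, Finset.mem_powerset]
        exact ⟨Finset.insert_subset hi (hS.trans (Finset.erase_subset _ _)),
          Finset.mem_insert_self _ _⟩
      · intro T hT
        rw [Finset.mem_filter, Finset.mem_powerset] at hT
        rw [Finset.mem_powerset]
        exact Finset.erase_subset_erase _ hT.1
      · intro S hS
        rw [Finset.mem_powerset] at hS
        have : i ∉ S := fun h => (Finset.mem_erase.mp (hS h)).1 rfl
        simpa using Finset.erase_insert this
      · intro T hT
        rw [Finset.mem_filter] at hT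
        simpa using Finset.insert_erase hT.2
      · intro S hS
        rw [Finset.mem_powerset] at hS
        have hiS : i ∉ S := fun h => (Finset.mem_erase.mp (hS h)).1 rfl
        rw [Finset.card_insert_of_notMem hiS]
        simp
    calc shapley P v i
        = ∑ S ∈ (P.erase i).powerset,
            (w S.card * v (insert i S) - w S.card * v S) := by
          simp only [shapley, ← hN, hw]
          exact Finset.sum_congr rfl fun S _ => by ring
      _ = (∑ S ∈ (P.erase i).powerset, w S.card * v (insert i S))
          - ∑ S ∈ (P.erase i).powerset, w S.card * v S := Finset.sum_sub_distrib _ _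
      _ = _ := by rw [hA, hpow]
  rw [Finset.sum_congr rfl step1, Finset.sum_sub_distrib]
  -- Step 2: swap the order of summation
  have swapA : ∑ i ∈ P, ∑ T ∈ P.powerset.filter (fun T => i ∈ T), w (T.card - 1) * v T
      = ∑ T ∈ P.powerset, (T.card : ℝ) * (w (T.card - 1) * v T) := by
    simp only [Finset.sum_filter]
    rw [Finset.sum_comm]
    refine Finset.sum_congr rfl fun T hT => ?_
    rw [Finset.mem_powerset] at hT
    rw [← Finset.sum_filter, Finset.sum_const, Finset.filter_mem_eq_inter,
      Finset.inter_eq_right.mpr hT, nsmul_eq_mul]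
  have swapB : ∑ i ∈ P, ∑ S ∈ P.powerset.filter (fun S => i ∉ S), w S.card * v S
      = ∑ S ∈ P.powerset, ((N - S.card : ℕ) : ℝ) * (w S.card * v S) := by
    simp only [Finset.sum_filter]
    rw [Finset.sum_comm]
    refine Finset.sum_congr rfl fun S hS => ?_
    rw [Finset.mem_powerset] at hS
    rw [← Finset.sum_filter, Finset.sum_const, nsmul_eq_mul]
    congr 2
    rw [Finset.filter_not, Finset.filter_mem_eq_inter, Finset.inter_eq_right.mpr hS,
      Finset.card_sdiff_of_subset hS]
  rw [swapA, swapB, ← Finset.sum_sub_distrib]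
  -- Step 3: evaluate the resulting sum
  rw [Finset.sum_eq_single_of_mem P (Finset.mem_powerset_self P)]
  · have h1 : N - (N - 1) - 1 = 0 := by omega
    have h2 : (N : ℝ) * (Nat.factorial (N - 1)) = Nat.factorial N := by
      rw [← Nat.cast_mul, Nat.mul_factorial_pred hNpos.ne']
    simp only [hw, ← hN, h1, Nat.sub_self, Nat.factorial_zero, Nat.cast_one, mul_one,
      Nat.cast_zero, zero_mul, sub_zero]
    field_simp
    rw [h2]
  · intro T hT hTP
    rw [Finset.mem_powerset] at hT
    rcases T.eq_empty_or_nonempty with rfl | hTne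
    · simp [h0]
    · have hk1 : 1 ≤ T.card := Finset.card_pos.mpr hTne
      have hkN : T.card < N := Finset.card_lt_card (Finset.ssubset_iff_subset_ne.mpr ⟨hT, hTP⟩)
      have key : (T.card : ℝ) * w (T.card - 1) = ((N - T.card : ℕ) : ℝ) * w T.card := by
        have hnat : T.card * (Nat.factorial (T.card - 1) * Nat.factorial (N - (T.card - 1) - 1))
            = (N - T.card) * (Nat.factorial T.card * Nat.factorial (N - T.card - 1)) := by
          have e1 : N - (T.card - 1) - 1 = N - T.card := by omega
          rw [e1, ← mul_assoc, Nat.mul_factorial_pred (by omega : T.card ≠ 0)]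
          rw [mul_comm (N - T.card), mul_assoc]
          congr 1
          rw [mul_comm, Nat.mul_factorial_pred (by omega : N - T.card ≠ 0)]
        simp only [hw]
        rw [mul_div_assoc', mul_div_assoc', ← Nat.cast_mul, ← Nat.cast_mul, ← mul_assoc,
          ← mul_assoc, ← Nat.cast_mul, ← Nat.cast_mul]
        congr 1
        norm_cast
        rw [mul_assoc, hnat, mul_assoc]
      rw [← mul_assoc, ← mul_assoc, key, sub_self]
end

section
/- Uniqueness of the Shapley value: any attribution operator φ mapping games v on a finite player set P to vectors in ℝ^P satisfying efficiency, null player, symmetry, and linearity coincides with the Shapley value on every game. -/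
open Finset

section ShapleyAux

variable {ι : Type*} [DecidableEq ι]

/-- The Shapley weight. -/
noncomputable def shw (n s : ℕ) : ℝ :=
  (Nat.factorial s * Nat.factorial (n - s - 1) : ℝ) / (Nat.factorial n : ℝ)

lemma shw_rec (s d : ℕ) : shw (s + d + 2) s + shw (s + d + 2) (s + 1) = shw (s + d + 1) s := by
  unfold shw
  have h1 : s + d + 2 - s - 1 = d + 1 := by omega
  have h2 : s + d + 2 - (s + 1) - 1 = d := by omega
  have h3 : s + d + 1 - s - 1 = d := by omega
  rw [h1, h2, h3]
  have e1 : Nat.factorial (d + 1) = (d+1) * Nat.factorial d := rfl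
  have e2 : Nat.factorial (s + 1) = (s+1) * Nat.factorial s := rfl
  have e3 : Nat.factorial (s + d + 2) = (s + d + 2) * Nat.factorial (s + d + 1) := rfl
  rw [e1, e2, e3]
  have p1 : (Nat.factorial (s+d+1) : ℝ) ≠ 0 := Nat.cast_ne_zero.2 (Nat.factorial_ne_zero _)
  have p4 : ((s:ℝ) + d + 2) ≠ 0 := by positivity
  field_simp
  push_cast
  ring

lemma shw_identity (m r : ℕ) :
    ∑ k ∈ Finset.range (m + 1), (Nat.choose m k : ℝ) * shw (m + r + 1) (r + k)
      = 1 / (r + 1 : ℝ) := by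
  induction m with
  | zero =>
      simp only [Finset.sum_range_one, Nat.choose_self, Nat.cast_one, one_mul, Nat.zero_add,
        shw, add_zero]
      rw [show r + 1 - r - 1 = 0 by omega]
      rw [Nat.factorial_succ]
      simp [Nat.factorial]
      rw [div_eq_inv_mul]
      have : (Nat.factorial r : ℝ) ≠ 0 := Nat.cast_ne_zero.2 (Nat.factorial_ne_zero _)
      field_simp
  | succ m ih =>
      set a : ℕ → ℝ := fun k => shw (m + 1 + r + 1) (r + k) with ha
      have e1 : ∑ k ∈ Finset.range (m+2), (Nat.choose (m+1) k : ℝ) * a k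
          = ∑ k ∈ Finset.range (m+1), ((Nat.choose m k : ℝ) + (Nat.choose m (k+1) : ℝ)) * a (k+1) + a 0 := by
        rw [Finset.sum_range_succ']
        simp [Nat.choose_succ_succ]
      have e2 : ∑ k ∈ Finset.range (m+1), (Nat.choose m (k+1) : ℝ) * a (k+1) + a 0
          = ∑ k ∈ Finset.range (m+1), (Nat.choose m k : ℝ) * a k := by
        have := (Finset.sum_range_succ' (fun k => (Nat.choose m k : ℝ) * a k) (m+1)).symm
        simp only [Nat.choose_zero_right, Nat.cast_one, one_mul] at this
        rw [this, Finset.sum_range_succ]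
        simp [Nat.choose_succ_self]
      have e3 : ∑ k ∈ Finset.range (m+1), (Nat.choose m k : ℝ) * (a k + a (k+1))
          = 1 / (r + 1 : ℝ) := by
        rw [← ih]
        apply Finset.sum_congr rfl
        intro k hk
        rw [Finset.mem_range] at hk
        congr 1
        have := shw_rec (r + k) (m - k)
        rw [show r + k + (m - k) + 2 = m + 1 + r + 1 by omega,
            show r + k + (m - k) + 1 = m + r + 1 by omega] at this
        simpa [ha, add_assoc] using this
      calc ∑ k ∈ Finset.range (m+1+1), (Nat.choose (m+1) k : ℝ) * shw (m+1+r+1) (r+k)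
          = ∑ k ∈ Finset.range (m+2), (Nat.choose (m+1) k : ℝ) * a k := rfl
        _ = ∑ k ∈ Finset.range (m+1), ((Nat.choose m k : ℝ) + (Nat.choose m (k+1) : ℝ)) * a (k+1) + a 0 := e1
        _ = ∑ k ∈ Finset.range (m+1), (Nat.choose m k : ℝ) * a (k+1)
            + (∑ k ∈ Finset.range (m+1), (Nat.choose m (k+1) : ℝ) * a (k+1) + a 0) := by
              simp [add_mul, Finset.sum_add_distrib]; ring
        _ = ∑ k ∈ Finset.range (m+1), (Nat.choose m k : ℝ) * a (k+1)
            + ∑ k ∈ Finset.range (m+1), (Nat.choose m k : ℝ) * a k := by rw [e2]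
        _ = ∑ k ∈ Finset.range (m+1), (Nat.choose m k : ℝ) * (a k + a (k+1)) := by
              rw [← Finset.sum_add_distrib]; apply Finset.sum_congr rfl; intro k _; ring
        _ = 1 / (r + 1 : ℝ) := e3

lemma shap_sum_interval {B C : Finset ι} (hBC : B ⊆ C) (f : Finset ι → ℝ) :
    ∑ S ∈ C.powerset.filter (fun S => B ⊆ S), f S = ∑ A ∈ (C \ B).powerset, f (B ∪ A) := by
  apply Finset.sum_nbij' (fun S => S \ B) (fun A => B ∪ A)
  · intro S hS
    simp only [Finset.mem_filter, Finset.mem_powerset] at hS ⊢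
    exact Finset.sdiff_subset_sdiff hS.1 Finset.Subset.rfl
  · intro A hA
    simp only [Finset.mem_filter, Finset.mem_powerset] at hA ⊢
    constructor
    · exact Finset.union_subset hBC (hA.trans (Finset.sdiff_subset))
    · exact Finset.subset_union_left
  · intro S hS
    simp only [Finset.mem_filter, Finset.mem_powerset] at hS
    exact Finset.union_sdiff_of_subset hS.2
  · intro A hA
    simp only [Finset.mem_powerset] at hA
    exact Finset.union_sdiff_cancel_left (Finset.disjoint_sdiff.mono_right hA)
  · intro S hS
    simp only [Finset.mem_filter, Finset.mem_powerset] at hS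
    rw [Finset.union_sdiff_of_subset hS.2]

lemma shap_alt_sum {R S : Finset ι} (hRS : R ⊆ S) :
    ∑ T ∈ S.powerset.filter (fun T => R ⊆ T), (-1 : ℝ)^(T.card - R.card)
      = if R = S then 1 else 0 := by
  rw [shap_sum_interval hRS]
  have hstep : ∀ A ∈ (S \ R).powerset, (-1:ℝ)^((R ∪ A).card - R.card) = (-1:ℝ)^A.card := by
    intro A hA
    rw [Finset.mem_powerset] at hA
    have hdisj : Disjoint R A := (Finset.disjoint_sdiff.mono_right hA)
    rw [Finset.card_union_of_disjoint hdisj]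
    congr 1
    omega
  rw [Finset.sum_congr rfl hstep]
  have : ∑ A ∈ (S \ R).powerset, (-1:ℝ)^A.card
      = ((∑ A ∈ (S \ R).powerset, (-1:ℤ)^A.card : ℤ) : ℝ) := by push_cast; rfl
  rw [this, Finset.sum_powerset_neg_one_pow_card]
  have : S \ R = ∅ ↔ R = S := by
    rw [Finset.sdiff_eq_empty_iff_subset]
    exact ⟨fun h => Finset.Subset.antisymm hRS h, fun h => h ▸ Finset.Subset.rfl⟩
  split_ifs with h1 h2 h2 <;> simp_all

/-- unanimity game -/
def ugame (T S : Finset ι) : ℝ := if T ⊆ S then 1 else 0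

/-- Harsanyi dividend -/
def hdiv (v : Finset ι → ℝ) (T : Finset ι) : ℝ :=
  ∑ R ∈ T.powerset, (-1:ℝ)^(T.card - R.card) * v R

lemma shap_mobius (v : Finset ι → ℝ) {S P : Finset ι} (hSP : S ⊆ P) :
    ∑ T ∈ P.powerset, hdiv v T * ugame T S = v S := by
  have step1 : ∑ T ∈ P.powerset, hdiv v T * ugame T S = ∑ T ∈ S.powerset, hdiv v T := by
    rw [← Finset.sum_subset (Finset.powerset_mono.2 hSP)
      (fun T hT hTS => by
        simp only [Finset.mem_powerset] at hTS
        simp [ugame, hTS])]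
    apply Finset.sum_congr rfl
    intro T hT
    simp only [Finset.mem_powerset] at hT
    simp [ugame, hT]
  rw [step1]
  unfold hdiv
  have step2 : ∀ T ∈ S.powerset, ∑ R ∈ T.powerset, (-1:ℝ)^(T.card - R.card) * v R
      = ∑ R ∈ S.powerset, (if R ⊆ T then (-1:ℝ)^(T.card - R.card) * v R else 0) := by
    intro T hT
    simp only [Finset.mem_powerset] at hT
    rw [← Finset.sum_subset (Finset.powerset_mono.2 hT)
      (fun R hR hRT => by
        simp only [Finset.mem_powerset] at hRT
        simp [hRT])]
    apply Finset.sum_congr rfl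
    intro R hR
    simp only [Finset.mem_powerset] at hR
    simp [hR]
  rw [Finset.sum_congr rfl step2, Finset.sum_comm]
  have step3 : ∀ R ∈ S.powerset,
      ∑ T ∈ S.powerset, (if R ⊆ T then (-1:ℝ)^(T.card - R.card) * v R else 0)
        = (if R = S then 1 else 0) * v R := by
    intro R hR
    simp only [Finset.mem_powerset] at hR
    rw [← Finset.sum_filter, ← Finset.sum_mul, shap_alt_sum hR]
  rw [Finset.sum_congr rfl step3]
  simp only [ite_mul, one_mul, zero_mul]
  rw [Finset.sum_ite_eq' S.powerset S v]
  simp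

lemma ugame_insert_of_not_mem {T : Finset ι} {i : ι} (hiT : i ∉ T) (S : Finset ι) :
    ugame T (insert i S) = ugame T S := by
  unfold ugame
  congr 1
  simp only [eq_iff_iff]
  constructor
  · intro h x hx
    rcases Finset.mem_insert.1 (h hx) with h' | h'
    · exact absurd (h' ▸ hx) hiT
    · exact h'
  · intro h; exact h.trans (Finset.subset_insert i S)

lemma shapley_sum (P : Finset ι) (I : Finset (Finset ι)) (c : Finset ι → ℝ)
    (g : Finset ι → Finset ι → ℝ) (i : ι) :
    shapley P (fun S => ∑ T ∈ I, c T * g T S) i = ∑ T ∈ I, c T * shapley P (g T) i := by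
  unfold shapley
  have e1 : ∀ S ∈ (P.erase i).powerset,
      ((Nat.factorial S.card * Nat.factorial (P.card - S.card - 1) : ℝ) /
        (Nat.factorial P.card : ℝ)) *
        ((∑ T ∈ I, c T * g T (insert i S)) - ∑ T ∈ I, c T * g T S)
      = ∑ T ∈ I, c T * (((Nat.factorial S.card * Nat.factorial (P.card - S.card - 1) : ℝ) /
        (Nat.factorial P.card : ℝ)) * (g T (insert i S) - g T S)) := by
    intro S _
    rw [← Finset.sum_sub_distrib, Finset.mul_sum]
    apply Finset.sum_congr rfl
    intro T _
    ring
  rw [Finset.sum_congr rfl e1, Finset.sum_comm]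
  apply Finset.sum_congr rfl
  intro T _
  rw [Finset.mul_sum]

lemma shapley_ext (P : Finset ι) (v w : Finset ι → ℝ) (h : ∀ S ⊆ P, v S = w S)
    (i : ι) (hi : i ∈ P) : shapley P v i = shapley P w i := by
  unfold shapley
  apply Finset.sum_congr rfl
  intro S hS
  rw [Finset.mem_powerset] at hS
  have hSP : S ⊆ P := hS.trans (Finset.erase_subset _ _)
  have hiSP : insert i S ⊆ P := Finset.insert_subset hi hSP
  rw [h S hSP, h _ hiSP]

lemma shapley_ugame (P T : Finset ι) (hTP : T ⊆ P) (i : ι) (hi : i ∈ P) :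
    shapley P (ugame T) i = if i ∈ T then 1 / (T.card : ℝ) else 0 := by
  by_cases hiT : i ∈ T
  · rw [if_pos hiT]
    have key : ∀ S ∈ (P.erase i).powerset,
        ugame T (insert i S) - ugame T S = if T.erase i ⊆ S then 1 else 0 := by
      intro S hS
      rw [Finset.mem_powerset] at hS
      have hiS : i ∉ S := fun h => (Finset.mem_erase.1 (hS h)).1 rfl
      have h2 : ugame T S = 0 := by
        unfold ugame
        rw [if_neg (fun hc => hiS (hc hiT))]
      have h3 : (T ⊆ insert i S) ↔ T.erase i ⊆ S := by
        constructor
        · intro h x hx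
          rcases Finset.mem_erase.1 hx with ⟨hxi, hxT⟩
          rcases Finset.mem_insert.1 (h hxT) with h' | h'
          · exact absurd h' hxi
          · exact h'
        · intro h x hx
          by_cases hxi : x = i
          · exact hxi ▸ Finset.mem_insert_self i S
          · exact Finset.mem_insert_of_mem (h (Finset.mem_erase.2 ⟨hxi, hx⟩))
      rw [h2, sub_zero]
      simp only [ugame, h3]
    unfold shapley
    rw [Finset.sum_congr rfl (fun S hS => by rw [key S hS])]
    have step : ∑ S ∈ (P.erase i).powerset,
        ((Nat.factorial S.card * Nat.factorial (P.card - S.card - 1) : ℝ) /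
          (Nat.factorial P.card : ℝ)) * (if T.erase i ⊆ S then 1 else 0)
        = ∑ S ∈ (P.erase i).powerset.filter (fun S => T.erase i ⊆ S), shw P.card S.card := by
      rw [Finset.sum_filter]
      apply Finset.sum_congr rfl
      intro S _
      unfold shw
      split_ifs <;> ring
    rw [step]
    have hBC : T.erase i ⊆ P.erase i := Finset.erase_subset_erase i hTP
    rw [shap_sum_interval hBC]
    have hdiff : (P.erase i) \ (T.erase i) = P \ T := by
      ext x
      simp only [Finset.mem_sdiff, Finset.mem_erase]
      constructor
      · rintro ⟨⟨hxi, hxP⟩, hx2⟩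
        refine ⟨hxP, fun hxT => hx2 ⟨hxi, hxT⟩⟩
      · rintro ⟨hxP, hxT⟩
        exact ⟨⟨fun h => hxT (h ▸ hiT), hxP⟩, fun h => hxT h.2⟩
    rw [hdiff]
    have hcard : ∀ A ∈ (P \ T).powerset, (T.erase i ∪ A).card = (T.card - 1) + A.card := by
      intro A hA
      rw [Finset.mem_powerset] at hA
      have hdisj : Disjoint (T.erase i) A := by
        apply Finset.disjoint_left.2
        intro x hx hxA
        exact (Finset.mem_sdiff.1 (hA hxA)).2 (Finset.mem_erase.1 hx).2
      rw [Finset.card_union_of_disjoint hdisj, Finset.card_erase_of_mem hiT]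
    rw [Finset.sum_congr rfl (fun A hA => by rw [hcard A hA])]
    rw [Finset.sum_powerset]
    have hinner : ∀ j ∈ Finset.range ((P \ T).card + 1),
        ∑ A ∈ Finset.powersetCard j (P \ T), shw P.card (T.card - 1 + A.card)
          = (Nat.choose (P \ T).card j : ℝ) * shw P.card (T.card - 1 + j) := by
      intro j _
      rw [Finset.sum_congr rfl (fun A hA => by
        rw [(Finset.mem_powersetCard.1 hA).2]), Finset.sum_const,
        Finset.card_powersetCard, nsmul_eq_mul]
    rw [Finset.sum_congr rfl hinner]
    have hcardPT : (P \ T).card = P.card - T.card := Finset.card_sdiff_of_subset hTP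
    have ht1 : 1 ≤ T.card := Finset.card_pos.2 ⟨i, hiT⟩
    have htP : T.card ≤ P.card := Finset.card_le_card hTP
    have := shw_identity (P.card - T.card) (T.card - 1)
    rw [show P.card - T.card + (T.card - 1) + 1 = P.card by omega] at this
    rw [show ((T.card - 1 : ℕ) : ℝ) + 1 = (T.card : ℝ) by
      rw [Nat.cast_sub ht1]; ring] at this
    rw [hcardPT]
    exact this
  · rw [if_neg hiT]
    unfold shapley
    apply Finset.sum_eq_zero
    intro S hS
    rw [ugame_insert_of_not_mem hiT, sub_self, mul_zero]

end ShapleyAux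

/-- Uniqueness of the Shapley value: any attribution operator satisfying
efficiency, null player, symmetry and linearity coincides with the Shapley
value on every game with `v ∅ = 0`. -/
theorem shapley_unique {ι : Type*} [DecidableEq ι] (P : Finset ι)
    (φ : (Finset ι → ℝ) → ι → ℝ)
    (heff : ∀ v : Finset ι → ℝ, v ∅ = 0 → ∑ i ∈ P, φ v i = v P)
    (hnull : ∀ (v : Finset ι → ℝ) (i : ι), i ∈ P →
      (∀ S ⊆ P.erase i, v (insert i S) = v S) → φ v i = 0)
    (hsym : ∀ (v : Finset ι → ℝ) (i j : ι), i ∈ P → j ∈ P → i ≠ j →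
      (∀ S ⊆ (P.erase i).erase j, v (insert i S) = v (insert j S)) →
      φ v i = φ v j)
    (hlin : ∀ (a b : ℝ) (v w : Finset ι → ℝ),
      φ (fun S => a * v S + b * w S) = fun i => a * φ v i + b * φ w i) :
    ∀ v : Finset ι → ℝ, v ∅ = 0 → ∀ i ∈ P, φ v i = shapley P v i := by
  -- φ applied to a zero game is zero
  have hzero : φ (fun _ => (0:ℝ)) = fun _ => 0 := by
    have := hlin 0 0 (fun _ => 0) (fun _ => 0)
    simpa using this
  -- φ applied to finite linear combinations
  have hsum : ∀ (I : Finset (Finset ι)) (c : Finset ι → ℝ) (g : Finset ι → Finset ι → ℝ)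
      (i : ι), φ (fun S => ∑ T ∈ I, c T * g T S) i = ∑ T ∈ I, c T * φ (g T) i := by
    intro I c g i
    induction I using Finset.induction_on with
    | empty => simp [hzero]
    | @insert a s ha ih =>
        have hfun : (fun S => ∑ T ∈ insert a s, c T * g T S)
            = (fun S => c a * g a S + 1 * ∑ T ∈ s, c T * g T S) := by
          funext S
          rw [Finset.sum_insert ha, one_mul]
        rw [hfun, hlin]
        simp only [one_mul]
        rw [Finset.sum_insert ha, ih]
  -- φ only depends on values on subsets of P
  have hext : ∀ (v w : Finset ι → ℝ), (∀ S ⊆ P, v S = w S) → ∀ i ∈ P, φ v i = φ w i := by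
    intro v w h i hi
    have hd : φ (fun S => v S - w S) i = 0 := by
      apply hnull _ i hi
      intro S hS
      have hSP : S ⊆ P := hS.trans (Finset.erase_subset _ _)
      have hiSP : insert i S ⊆ P := Finset.insert_subset hi hSP
      rw [h S hSP, h _ hiSP]
      simp
    have hfun : v = fun S => 1 * w S + 1 * (v S - w S) := by
      funext S; ring
    rw [hfun, hlin]
    simp only [one_mul]
    rw [hd, add_zero]
  -- φ on unanimity games
  have hug : ∀ T : Finset ι, T ⊆ P → T ≠ ∅ → ∀ i ∈ P,
      φ (ugame T) i = if i ∈ T then 1 / (T.card : ℝ) else 0 := by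
    intro T hTP hTne i hi
    by_cases hiT : i ∈ T
    · rw [if_pos hiT]
      have hnul : ∀ j ∈ P, j ∉ T → φ (ugame T) j = 0 := by
        intro j hj hjT
        exact hnull _ j hj (fun S _ => ugame_insert_of_not_mem hjT S)
      have hconst : ∀ j ∈ T, φ (ugame T) j = φ (ugame T) i := by
        intro j hj
        by_cases hji : j = i
        · rw [hji]
        · apply hsym (ugame T) j i (hTP hj) hi hji
          intro S hS
          have hiS : i ∉ S := fun h => (Finset.mem_erase.1 (hS h)).1 rfl
          have hjS : j ∉ S := fun h =>
            (Finset.mem_erase.1 (Finset.erase_subset _ _ (hS h))).1 rfl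
          unfold ugame
          rw [if_neg, if_neg]
          · intro hc
            rcases Finset.mem_insert.1 (hc hj) with h' | h'
            · exact hji (h'.trans rfl) |>.elim
            · exact hjS h'
          · intro hc
            rcases Finset.mem_insert.1 (hc hiT) with h' | h'
            · exact hji h'.symm
            · exact hiS h'
      have heq : ∑ j ∈ P, φ (ugame T) j = 1 := by
        rw [heff (ugame T) (by
          unfold ugame
          rw [if_neg (fun hc => hTne (Finset.subset_empty.1 hc))])]
        unfold ugame
        rw [if_pos hTP]
      have heq2 : ∑ j ∈ P, φ (ugame T) j = (T.card : ℝ) * φ (ugame T) i := by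
        rw [← Finset.sum_subset hTP (fun j hj hjT => hnul j hj hjT)]
        rw [Finset.sum_congr rfl hconst, Finset.sum_const, nsmul_eq_mul]
      have hTc : (T.card : ℝ) ≠ 0 := by
        simp only [ne_eq, Nat.cast_eq_zero, Finset.card_eq_zero]
        exact hTne
      rw [heq] at heq2
      field_simp
      linarith [heq2]
    · rw [if_neg hiT]
      exact hnull _ i hi (fun S _ => ugame_insert_of_not_mem hiT S)
  -- main argument
  intro v hv0 i hi
  set v' : Finset ι → ℝ := fun S => ∑ T ∈ P.powerset, hdiv v T * ugame T S with hv'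
  have hvv' : ∀ S ⊆ P, v S = v' S := fun S hS => (shap_mobius v hS).symm
  have hdiv_empty : hdiv v ∅ = 0 := by
    simp [hdiv, hv0]
  have step1 : φ v i = φ v' i := hext v v' hvv' i hi
  have step2 : φ v' i = ∑ T ∈ P.powerset, hdiv v T * φ (ugame T) i :=
    hsum P.powerset (hdiv v) ugame i
  have step3 : ∑ T ∈ P.powerset, hdiv v T * φ (ugame T) i
      = ∑ T ∈ P.powerset, hdiv v T * shapley P (ugame T) i := by
    apply Finset.sum_congr rfl
    intro T hT
    rw [Finset.mem_powerset] at hT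
    by_cases hTne : T = ∅
    · rw [hTne, hdiv_empty, zero_mul, zero_mul]
    · rw [hug T hT hTne i hi, shapley_ugame P T hT i hi]
  have step4 : ∑ T ∈ P.powerset, hdiv v T * shapley P (ugame T) i = shapley P v' i :=
    (shapley_sum P P.powerset (hdiv v) ugame i).symm
  have step5 : shapley P v' i = shapley P v i :=
    shapley_ext P v' v (fun S hS => (hvv' S hS).symm) i hi
  rw [step1, step2, step3, step4, step5]
end

section
/- Unanimity games form a basis: every game v : Set P → ℝ with v(∅) = 0 can be written uniquely as a linear combination v = Σ_{T ⊆ P, T ≠ ∅} c_T · u_T with coefficients c_T = Σ_{S ⊆ T} (-1)^{|T|-|S|} v(S). -/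
open Finset

private lemma neg_one_pow_sub' (a b : ℕ) (h : b ≤ a) :
    (-1 : ℝ) ^ (a - b) = (-1) ^ a * (-1) ^ b := by
  have h1 : (-1 : ℝ) ^ (a - b) * (-1) ^ b = (-1) ^ a := by
    rw [← pow_add, Nat.sub_add_cancel h]
  have h2 : (-1 : ℝ) ^ b * (-1) ^ b = 1 := by
    rw [← pow_add, ← two_mul, pow_mul]; norm_num
  calc (-1 : ℝ) ^ (a - b) = (-1) ^ (a - b) * ((-1) ^ b * (-1) ^ b) := by rw [h2, mul_one]
    _ = (-1) ^ a * (-1) ^ b := by rw [← mul_assoc, h1]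

private lemma sum_pows_real {ι : Type*} [DecidableEq ι] (A : Finset ι) :
    ∑ W ∈ A.powerset, (-1 : ℝ) ^ W.card = if A = ∅ then 1 else 0 := by
  have := Finset.sum_powerset_neg_one_pow_card (x := A)
  have h : ((∑ W ∈ A.powerset, (-1 : ℤ) ^ W.card : ℤ) : ℝ)
      = ∑ W ∈ A.powerset, (-1 : ℝ) ^ W.card := by push_cast; ring_nf
  rw [← h, this]
  split <;> norm_num

/-- Möbius-style sum over a powerset. -/
private lemma base_sum {ι : Type*} [DecidableEq ι] (A : Finset ι) :
    ∑ W ∈ A.powerset, (-1 : ℝ) ^ (A.card - W.card) = if A = ∅ then 1 else 0 := by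
  have : ∑ W ∈ A.powerset, (-1 : ℝ) ^ (A.card - W.card)
      = (-1 : ℝ) ^ A.card * ∑ W ∈ A.powerset, (-1 : ℝ) ^ W.card := by
    rw [Finset.mul_sum]
    refine Finset.sum_congr rfl fun W hW => ?_
    exact neg_one_pow_sub' _ _ (Finset.card_le_card (Finset.mem_powerset.mp hW))
  rw [this, sum_pows_real]
  by_cases hA : A = ∅
  · subst hA; simp
  · simp [hA]

/-- Interval sum, fixed bottom `U`, varying top exponent. -/
private lemma interval_sum_bot {ι : Type*} [DecidableEq ι] (U S : Finset ι) (h : U ⊆ S) :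
    ∑ T ∈ S.powerset.filter (U ⊆ ·), (-1 : ℝ) ^ (T.card - U.card)
      = if U = S then 1 else 0 := by
  have key : ∑ T ∈ S.powerset.filter (U ⊆ ·), (-1 : ℝ) ^ (T.card - U.card)
      = ∑ W ∈ (S \ U).powerset, (-1 : ℝ) ^ W.card := by
    refine Finset.sum_nbij' (fun T => T \ U) (fun W => W ∪ U) ?_ ?_ ?_ ?_ ?_
    · intro T hT
      simp only [Finset.mem_filter, Finset.mem_powerset] at hT
      exact Finset.mem_powerset.mpr (Finset.sdiff_subset_sdiff hT.1 Finset.Subset.rfl)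
    · intro W hW
      simp only [Finset.mem_powerset] at hW
      simp only [Finset.mem_filter, Finset.mem_powerset]
      exact ⟨Finset.union_subset (hW.trans Finset.sdiff_subset) h, Finset.subset_union_right⟩
    · intro T hT
      simp only [Finset.mem_filter, Finset.mem_powerset] at hT
      exact Finset.sdiff_union_of_subset hT.2
    · intro W hW
      simp only [Finset.mem_powerset] at hW
      have hd : Disjoint W U := Finset.disjoint_of_subset_left hW (Finset.sdiff_disjoint)
      show (W ∪ U) \ U = W
      rw [Finset.union_sdiff_cancel_right hd]
    · intro T hT
      simp only [Finset.mem_filter, Finset.mem_powerset] at hT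
      rw [Finset.card_sdiff_of_subset hT.2]
  rw [key, sum_pows_real]
  congr 1
  simp only [Finset.sdiff_eq_empty_iff_subset, eq_iff_iff]
  constructor
  · intro he; exact (Finset.Subset.antisymm he h).symm
  · intro hs; subst hs; exact Finset.Subset.rfl

/-- Interval sum, fixed top `T`, varying bottom exponent. -/
private lemma interval_sum_top {ι : Type*} [DecidableEq ι] (U T : Finset ι) (h : U ⊆ T) :
    ∑ S' ∈ T.powerset.filter (U ⊆ ·), (-1 : ℝ) ^ (T.card - S'.card)
      = if U = T then 1 else 0 := by
  have key : ∑ S' ∈ T.powerset.filter (U ⊆ ·), (-1 : ℝ) ^ (T.card - S'.card)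
      = ∑ W ∈ (T \ U).powerset, (-1 : ℝ) ^ ((T \ U).card - W.card) := by
    refine Finset.sum_nbij' (fun S' => S' \ U) (fun W => W ∪ U) ?_ ?_ ?_ ?_ ?_
    · intro S' hS'
      simp only [Finset.mem_filter, Finset.mem_powerset] at hS'
      exact Finset.mem_powerset.mpr (Finset.sdiff_subset_sdiff hS'.1 Finset.Subset.rfl)
    · intro W hW
      simp only [Finset.mem_powerset] at hW
      simp only [Finset.mem_filter, Finset.mem_powerset]
      exact ⟨Finset.union_subset (hW.trans Finset.sdiff_subset) h, Finset.subset_union_right⟩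
    · intro S' hS'
      simp only [Finset.mem_filter, Finset.mem_powerset] at hS'
      exact Finset.sdiff_union_of_subset hS'.2
    · intro W hW
      simp only [Finset.mem_powerset] at hW
      have hd : Disjoint W U := Finset.disjoint_of_subset_left hW (Finset.sdiff_disjoint)
      show (W ∪ U) \ U = W
      rw [Finset.union_sdiff_cancel_right hd]
    · intro S' hS'
      simp only [Finset.mem_filter, Finset.mem_powerset] at hS'
      congr 1
      rw [Finset.card_sdiff_of_subset h, Finset.card_sdiff_of_subset hS'.2]
      have h1 : U.card ≤ S'.card := Finset.card_le_card hS'.2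
      have h2 : S'.card ≤ T.card := Finset.card_le_card hS'.1
      omega
  rw [key, base_sum]
  congr 1
  simp only [Finset.sdiff_eq_empty_iff_subset, eq_iff_iff]
  constructor
  · intro hs; exact Finset.Subset.antisymm h hs
  · intro he; subst he; exact Finset.Subset.rfl

/-- Swap a double powerset sum. -/
private lemma swap_sum {ι : Type*} [DecidableEq ι] (S : Finset ι) (f : Finset ι → Finset ι → ℝ) :
    ∑ T ∈ S.powerset, ∑ U ∈ T.powerset, f T U
      = ∑ U ∈ S.powerset, ∑ T ∈ S.powerset.filter (U ⊆ ·), f T U := by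
  have step1 : ∑ T ∈ S.powerset, ∑ U ∈ T.powerset, f T U
      = ∑ T ∈ S.powerset, ∑ U ∈ S.powerset, if U ⊆ T then f T U else 0 := by
    refine Finset.sum_congr rfl fun T hT => ?_
    rw [← Finset.sum_filter]
    refine Finset.sum_congr ?_ fun _ _ => rfl
    ext U
    simp only [Finset.mem_powerset, Finset.mem_filter]
    exact ⟨fun hU => ⟨hU.trans (Finset.mem_powerset.mp hT), hU⟩, fun hU => hU.2⟩
  rw [step1, Finset.sum_comm]
  refine Finset.sum_congr rfl fun U hU => ?_
  rw [← Finset.sum_filter]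

/-- Unanimity games form a basis: every game with `v ∅ = 0` is a unique linear
combination of unanimity games over nonempty coalitions, with Möbius
coefficients `c T = ∑ S ⊆ T, (-1)^(|T|-|S|) v S`. -/
theorem unanimity_basis {ι : Type*} [DecidableEq ι] (P : Finset ι)
    (v : Finset ι → ℝ) (h0 : v ∅ = 0) :
    (∀ S ∈ P.powerset,
        v S = ∑ T ∈ P.powerset.filter (· ≠ ∅),
          (∑ S' ∈ T.powerset, (-1 : ℝ) ^ (T.card - S'.card) * v S') *
            (if T ⊆ S then 1 else 0)) ∧
      ∀ c : Finset ι → ℝ,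
        (∀ S ∈ P.powerset,
            v S = ∑ T ∈ P.powerset.filter (· ≠ ∅),
              c T * (if T ⊆ S then 1 else 0)) →
          ∀ T ∈ P.powerset, T ≠ ∅ →
            c T = ∑ S' ∈ T.powerset, (-1 : ℝ) ^ (T.card - S'.card) * v S' := by
  set m : Finset ι → ℝ := fun T => ∑ S' ∈ T.powerset, (-1 : ℝ) ^ (T.card - S'.card) * v S' with hm
  have hm0 : m ∅ = 0 := by simp [hm, h0]
  constructor
  · intro S hS
    rw [Finset.mem_powerset] at hS
    -- turn indicators into a filter over S.powerset
    have e1 : ∑ T ∈ P.powerset.filter (· ≠ ∅), m T * (if T ⊆ S then 1 else 0)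
        = ∑ T ∈ (P.powerset.filter (· ≠ ∅)).filter (· ⊆ S), m T := by
      rw [Finset.sum_filter (s := P.powerset.filter (· ≠ ∅)) (p := (· ⊆ S)) (f := m)]
      refine Finset.sum_congr rfl fun T hT => ?_
      split <;> simp
    have e2 : (P.powerset.filter (· ≠ ∅)).filter (· ⊆ S) = S.powerset.filter (· ≠ ∅) := by
      ext T
      simp only [Finset.mem_filter, Finset.mem_powerset]
      exact ⟨fun h => ⟨h.2, h.1.2⟩, fun h => ⟨⟨h.1.trans hS, h.2⟩, h.1⟩⟩
    have e3 : ∑ T ∈ S.powerset.filter (· ≠ ∅), m T = ∑ T ∈ S.powerset, m T := by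
      refine Finset.sum_filter_of_ne fun T _ hne => ?_
      intro hTe; exact hne (hTe ▸ hm0)
    have e4 : ∑ T ∈ S.powerset, m T = v S := by
      simp only [hm]
      rw [swap_sum S (fun T U => (-1 : ℝ) ^ (T.card - U.card) * v U)]
      have : ∀ U ∈ S.powerset,
          ∑ T ∈ S.powerset.filter (U ⊆ ·), (-1 : ℝ) ^ (T.card - U.card) * v U
            = (if U = S then 1 else 0) * v U := by
        intro U hU
        rw [← Finset.sum_mul, interval_sum_bot U S (Finset.mem_powerset.mp hU)]
      rw [Finset.sum_congr rfl this]
      simp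
    rw [e1, e2, e3, e4]
  · intro c hc T hT hTne
    rw [Finset.mem_powerset] at hT
    have key : ∑ S' ∈ T.powerset, (-1 : ℝ) ^ (T.card - S'.card) * v S'
        = ∑ U ∈ P.powerset.filter (· ≠ ∅), c U * (if U = T then 1 else 0) := by
      have hv : ∀ S' ∈ T.powerset,
          (-1 : ℝ) ^ (T.card - S'.card) * v S'
            = ∑ U ∈ P.powerset.filter (· ≠ ∅),
                c U * ((-1 : ℝ) ^ (T.card - S'.card) * (if U ⊆ S' then 1 else 0)) := by
        intro S' hS'
        have hS'P : S' ∈ P.powerset :=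
          Finset.mem_powerset.mpr ((Finset.mem_powerset.mp hS').trans hT)
        rw [hc S' hS'P, Finset.mul_sum]
        refine Finset.sum_congr rfl fun U hU => ?_
        ring
      rw [Finset.sum_congr rfl hv, Finset.sum_comm]
      refine Finset.sum_congr rfl fun U hU => ?_
      rw [← Finset.mul_sum]
      congr 1
      -- inner sum over S' ⊆ T with indicator U ⊆ S'
      have : ∑ S' ∈ T.powerset, (-1 : ℝ) ^ (T.card - S'.card) * (if U ⊆ S' then 1 else 0)
          = ∑ S' ∈ T.powerset.filter (U ⊆ ·), (-1 : ℝ) ^ (T.card - S'.card) := by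
        rw [Finset.sum_filter]
        refine Finset.sum_congr rfl fun S' _ => ?_
        split <;> simp
      rw [this]
      by_cases hUT : U ⊆ T
      · rw [interval_sum_top U T hUT]
      · have : T.powerset.filter (U ⊆ ·) = ∅ := by
          ext S'
          simp only [Finset.mem_filter, Finset.mem_powerset, Finset.notMem_empty, iff_false]
          rintro ⟨h1, h2⟩
          exact hUT (h2.trans h1)
        rw [this, Finset.sum_empty]
        have : U ≠ T := fun he => hUT (he ▸ Finset.Subset.rfl)
        simp [this]
    rw [key]
    have hTmem : T ∈ P.powerset.filter (· ≠ ∅) := by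
      simp only [Finset.mem_filter, Finset.mem_powerset]
      exact ⟨hT, hTne⟩
    rw [Finset.sum_eq_single T]
    · simp
    · intro U _ hne; simp [hne]
    · intro habs; exact absurd hTmem habs
end
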